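/- arXiv:1008.1434 — 7 statements merged into one kernel-verified Lean document; each statement's English description precedes it below -/
import Mathlib

section
/- Let A be a unital complex algebra, Γ an invertible element of A, and δ : A → A a linear map such that δ(Γ) = δ(Γ S₁)S₂ + Γ S₁ δ(S₂) whenever S₁S₂ = 1. Then for every idempotent P in A, δ(Γ P) = δ(Γ)P + Γ δ(P). -/
/-- If `Γ` is invertible and `δ` is linear with
`δ(Γ) = δ(Γ S₁) S₂ + Γ S₁ δ(S₂)` whenever `S₁ S₂ = 1`, then for every idempotent `P`
one has `δ(Γ P) = δ(Γ) P + Γ δ(P)`. -/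
theorem stmt3 {A : Type*} [Ring A] [Algebra ℂ A] (Γ : A) (hΓ : IsUnit Γ)
    (δ : A →ₗ[ℂ] A)
    (h : ∀ S₁ S₂ : A, S₁ * S₂ = 1 → δ Γ = δ (Γ * S₁) * S₂ + Γ * S₁ * δ S₂) :
    ∀ P : A, P * P = P → δ (Γ * P) = δ Γ * P + Γ * δ P := by
  intro P hP
  have hδ1 : δ 1 = 0 := by
    have h11 := h 1 1 (mul_one 1)
    rw [mul_one, mul_one] at h11
    exact hΓ.mul_left_cancel ((left_eq_add.mp h11).trans (mul_zero Γ).symm)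
  set a : ℂ := (1 + Real.sqrt 3 * Complex.I)/2 with ha_def
  set b : ℂ := (1 - Real.sqrt 3 * Complex.I)/2 with hb_def
  have hs3 : ((Real.sqrt 3 : ℝ) : ℂ)^2 = 3 := by
    rw [← Complex.ofReal_pow, Real.sq_sqrt (by norm_num)]; norm_num
  have ha : a + b = 1 := by rw [ha_def, hb_def]; ring
  have hab : a * b = 1 := by
    rw [ha_def, hb_def]; field_simp; ring_nf; rw [Complex.I_sq]; linear_combination hs3
  have hne : b - a ≠ 0 := by
    rw [hb_def, ha_def]
    simp only [div_sub_div_same, ne_eq]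
    intro hc
    have : ((Real.sqrt 3 : ℝ) : ℂ) * Complex.I = 0 := by linear_combination -hc
    simp [Real.sqrt_eq_zero', Complex.ext_iff] at this
  have key : ∀ u v : ℂ, u + v = 1 → u * v = 1 →
      (1 - u • P) * (1 - v • P) = 1 := by
    intro u v huv huv2
    have e : (1 - u • P) * (1 - v • P) = 1 - u • P - v • P + (u*v) • (P*P) := by
      simp only [mul_sub, sub_mul, one_mul, mul_one, smul_mul_smul_comm]; abel
    have hsum : u • P + v • P = P := by rw [← add_smul, huv, one_smul]
    rw [e, hP, huv2, one_smul, sub_sub, hsum]; abel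
  have expand : ∀ u v : ℂ, u + v = 1 → u * v = 1 →
      v • (δ Γ * P) + u • δ (Γ * P) + v • (Γ * δ P)
        = δ (Γ * P) * P + Γ * P * δ P := by
    intro u v huv huv2
    have h1 := h (1 - u • P) (1 - v • P) (key u v huv huv2)
    have e1 : Γ * (1 - u • P) = Γ - u • (Γ * P) := by
      rw [mul_sub, mul_one, mul_smul_comm]
    have e2 : δ (Γ - u • (Γ * P)) = δ Γ - u • δ (Γ * P) := by
      rw [map_sub, map_smul]
    have e3 : δ (1 - v • P) = - (v • δ P) := by
      rw [map_sub, map_smul, hδ1, zero_sub]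
    rw [e1, e2, e3] at h1
    have hexp : (δ Γ - u • δ (Γ * P)) * (1 - v • P) + (Γ - u • (Γ * P)) * -(v • δ P)
        = δ Γ - v • (δ Γ * P) - u • δ (Γ * P) + (u*v) • (δ (Γ * P) * P)
          - v • (Γ * δ P) + (u*v) • (Γ * P * δ P) := by
      simp only [mul_sub, sub_mul, one_mul, mul_one, mul_neg, neg_mul, mul_smul_comm,
        smul_mul_assoc, smul_smul, smul_neg, neg_neg]
      module
    have h2 := h1.trans hexp
    rw [huv2, one_smul, one_smul] at h2
    have h4 : v • (δ Γ * P) + u • δ (Γ * P) + v • (Γ * δ P) - (δ (Γ * P) * P + Γ * P * δ P)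
        = δ Γ - (δ Γ - v • (δ Γ * P) - u • δ (Γ * P) + δ (Γ * P) * P
          - v • (Γ * δ P) + Γ * P * δ P) := by abel
    rw [← h2, sub_self] at h4
    exact sub_eq_zero.mp h4
  have E1 := expand a b ha hab
  have E2 := expand b a (by rw [add_comm]; exact ha) (by rw [mul_comm]; exact hab)
  have hdiff : (b - a) • (δ Γ * P + Γ * δ P - δ (Γ * P))
      = (b • (δ Γ * P) + a • δ (Γ * P) + b • (Γ * δ P))
        - (a • (δ Γ * P) + b • δ (Γ * P) + a • (Γ * δ P)) := by module
  rw [E1, E2, sub_self] at hdiff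
  have h0 := inv_smul_smul₀ hne (δ Γ * P + Γ * δ P - δ (Γ * P))
  rw [hdiff, smul_zero] at h0
  exact (sub_eq_zero.mp h0.symm).symm
end

section
/- Let A = T(n, ℂ) be the algebra of n×n upper triangular complex matrices (n ≥ 1), Γ an invertible element of A, and δ : A → A a linear map satisfying δ(Γ) = δ(Γ S₁)S₂ + Γ S₁ δ(S₂) for all S₁, S₂ in A with S₁S₂ = I. Then δ(S₁)S₂ + S₁δ(S₂) = 0 for all S₁, S₂ in A with S₁S₂ = I; in particular δ is a derivable map at I with δ(I) = 0. -/
set_option maxHeartbeats 1000000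
set_option synthInstance.maxHeartbeats 400000

/-- The algebra `T(n, ℂ)` of upper triangular `n × n` complex matrices, as a
unital subalgebra of `Matₙ(ℂ)`. -/
def upperTriangularAlg (n : ℕ) : Subalgebra ℂ (Matrix (Fin n) (Fin n) ℂ) where
  carrier := {M | M.BlockTriangular id}
  mul_mem' := fun ha hb => ha.mul hb
  add_mem' := fun ha hb => ha.add hb
  algebraMap_mem' := fun r i j hij => by
    rw [Matrix.algebraMap_eq_diagonal]
    exact Matrix.diagonal_apply_ne _ (ne_of_gt hij)

lemma stmt5_mem_std {n : ℕ} (i j : Fin n) (c : ℂ) (hc : ¬ j < i ∨ c = 0) :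
    Matrix.single i j c ∈ upperTriangularAlg n := by
  intro a b hab
  simp only [Matrix.single, Matrix.of_apply]
  rcases hc with hc | hc
  · split
    · next hq => exact absurd (hq.2 ▸ hq.1 ▸ hab) hc
    · rfl
  · simp [hc]

lemma stmt5_rep {n : ℕ} (M : upperTriangularAlg n) :
    M = ∑ i : Fin n, ∑ j : Fin n,
      (⟨Matrix.single i j ((M : Matrix (Fin n) (Fin n) ℂ) i j),
        stmt5_mem_std i j _ (by
          by_cases hji : j < i
          · exact Or.inr (M.2 hji)
          · exact Or.inl hji)⟩ : upperTriangularAlg n) := by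
  apply Subtype.ext
  push_cast
  exact Matrix.matrix_eq_sum_single _

/-- Let `A = T(n, ℂ)` (`n ≥ 1`), `Γ` invertible in `A`, and `δ : A → A`
linear with `δ(Γ) = δ(Γ S₁) S₂ + Γ S₁ δ(S₂)` whenever `S₁ S₂ = I`.  Then
`δ(S₁) S₂ + S₁ δ(S₂) = 0` whenever `S₁ S₂ = I`; in particular `δ(I) = 0`. -/
theorem stmt5 (n : ℕ) (hn : 1 ≤ n) (Γ : upperTriangularAlg n) (hΓ : IsUnit Γ)
    (δ : upperTriangularAlg n →ₗ[ℂ] upperTriangularAlg n)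
    (h : ∀ S₁ S₂ : upperTriangularAlg n, S₁ * S₂ = 1 →
      δ Γ = δ (Γ * S₁) * S₂ + Γ * S₁ * δ S₂) :
    (∀ S₁ S₂ : upperTriangularAlg n, S₁ * S₂ = 1 → δ S₁ * S₂ + S₁ * δ S₂ = 0) ∧
      δ 1 = 0 := by
  -- δ(1) = 0
  have h11 := h 1 1 (one_mul 1)
  simp only [mul_one] at h11
  have hδ1 : δ 1 = 0 :=
    hΓ.mul_left_cancel (by rw [mul_zero]; exact (left_eq_add.mp h11))
  -- Leibniz rule at square-zero elements
  have keyE : ∀ E : upperTriangularAlg n, E * E = 0 → δ (Γ * E) = δ Γ * E + Γ * δ E := by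
    intro E hE
    have e1 := h (1 + E) (1 - E) (by simp [mul_add, add_mul, mul_sub, sub_mul, hE])
    have e2 := h (1 - E) (1 + E) (by simp [mul_add, add_mul, mul_sub, sub_mul, hE])
    simp only [mul_add, add_mul, mul_sub, sub_mul, mul_one, one_mul, map_add, map_sub,
      mul_assoc] at e1 e2
    simp only [hδ1, mul_zero, zero_mul, sub_zero, zero_sub, add_zero, zero_add] at e1 e2
    linear_combination (norm := module) (-(2:ℂ)⁻¹) • e1 + ((2:ℂ)⁻¹) • e2
  -- Leibniz rule at idempotents
  have keyP : ∀ P : upperTriangularAlg n, P * P = P → δ (Γ * P) = δ Γ * P + Γ * δ P := by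
    intro P hP
    have e1 := h (1 - (P + P)) (1 - (P + P))
      (by simp [mul_add, add_mul, mul_sub, sub_mul, hP]; abel)
    have e2 := h (1 + P) (1 - (2:ℂ)⁻¹ • P)
      (by simp [mul_add, add_mul, mul_sub, sub_mul, mul_smul_comm, smul_mul_assoc, hP]; module)
    simp only [mul_add, add_mul, mul_sub, sub_mul, mul_one, one_mul, map_add, map_sub, map_smul,
      mul_smul_comm, smul_mul_assoc, mul_assoc] at e1 e2
    simp only [hδ1, mul_zero, zero_mul, sub_zero, zero_sub, add_zero, zero_add,
      smul_zero] at e1 e2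
    linear_combination (norm := module) (-(6:ℂ)⁻¹) • e1 + (-(4:ℂ)/3) • e2
  -- The defect of the Leibniz rule, as a linear map
  set D : upperTriangularAlg n →ₗ[ℂ] upperTriangularAlg n :=
    δ ∘ₗ LinearMap.mulLeft ℂ Γ - LinearMap.mulLeft ℂ (δ Γ) - (LinearMap.mulLeft ℂ Γ) ∘ₗ δ
    with hDdef
  have hD : ∀ R, D R = δ (Γ * R) - δ Γ * R - Γ * δ R := fun R => by
    simp [hDdef, LinearMap.sub_apply, LinearMap.comp_apply, LinearMap.mulLeft_apply,
      LinearMap.mulRight_apply]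
  -- D vanishes on the standard basis elements of the algebra
  have hDbasis : ∀ (i j : Fin n) (hij : ¬ j < i),
      D ⟨Matrix.single i j 1, stmt5_mem_std i j 1 (Or.inl hij)⟩ = 0 := by
    intro i j hij
    set b : upperTriangularAlg n := ⟨Matrix.single i j 1,
      stmt5_mem_std i j 1 (Or.inl hij)⟩ with hb
    rcases eq_or_lt_of_le (not_lt.mp hij) with heq | hlt
    · -- i = j : idempotent
      have hbb : b * b = b := by
        apply Subtype.ext
        push_cast
        subst heq
        rw [Matrix.single_mul_single_same, mul_one]
      rw [hD, keyP b hbb]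
      abel
    · -- i < j : square-zero
      have hbb : b * b = 0 := by
        apply Subtype.ext
        push_cast
        exact Matrix.single_mul_single_of_ne (h := hlt.ne') ..
      rw [hD, keyE b hbb]
      abel
  -- hence D vanishes on single-entry matrices
  have hDgen : ∀ (i j : Fin n) (c : ℂ)
      (hm : Matrix.single i j c ∈ upperTriangularAlg n),
      D ⟨Matrix.single i j c, hm⟩ = 0 := by
    intro i j c hm
    by_cases hji : j < i
    · have hc : c = 0 := by
        have := hm hji
        rwa [Matrix.single_apply_same] at this
      have hz : (⟨Matrix.single i j c, hm⟩ : upperTriangularAlg n) = 0 := by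
        apply Subtype.ext
        push_cast
        rw [hc]
        exact Matrix.single_zero i j
      rw [hz, map_zero]
    · have hs : (⟨Matrix.single i j c, hm⟩ : upperTriangularAlg n) =
          c • ⟨Matrix.single i j 1, stmt5_mem_std i j 1 (Or.inl hji)⟩ := by
        apply Subtype.ext
        push_cast
        rw [Matrix.smul_single]
        simp
      rw [hs, map_smul, hDbasis i j hji, smul_zero]
  -- hence D = 0
  have key0 : ∀ R : upperTriangularAlg n, D R = 0 := by
    intro R
    rw [stmt5_rep R, map_sum]
    refine Finset.sum_eq_zero fun i _ => ?_
    rw [map_sum]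
    refine Finset.sum_eq_zero fun j _ => ?_
    exact hDgen _ _ _ _
  -- the Leibniz rule
  have key : ∀ R : upperTriangularAlg n, δ (Γ * R) = δ Γ * R + Γ * δ R := by
    intro R
    have h' := key0 R
    rw [hD, sub_sub, sub_eq_zero] at h'
    exact h'
  refine ⟨?_, hδ1⟩
  intro S₁ S₂ h12
  have e := h S₁ S₂ h12
  rw [key S₁, add_mul, mul_assoc (δ Γ), h12, mul_one, add_assoc] at e
  have h0 := left_eq_add.mp e
  exact hΓ.mul_left_cancel (by rw [mul_zero, mul_add, ← mul_assoc, ← mul_assoc]; exact h0)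
end

section
/- Let H and K be complex Hilbert spaces with dim H > 1, and let φ : B(K, H) → B(K, H) be a linear map such that T φ(S) = 0 for every T in B(H) and S in B(K, H) with TS = 0. Then for each x in H and g in K there exists a vector ω in K with φ(x ⊗ g) = x ⊗ ω, where x ⊗ g denotes the rank-one operator y ↦ ⟨y, g⟩x. -/
open scoped ComplexInnerProductSpace

set_option synthInstance.maxHeartbeats 400000
set_option maxHeartbeats 800000

/-- If `dim H > 1` and `φ : B(K,H) → B(K,H)` is linear with
`T φ(S) = 0` whenever `T S = 0` (`T ∈ B(H)`, `S ∈ B(K,H)`), then for each `x ∈ H`,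
`g ∈ K` there is `ω ∈ K` with `φ(x ⊗ g) = x ⊗ ω`, where `x ⊗ g : y ↦ ⟨y, g⟩ x`. -/
theorem stmt6 {H K : Type*}
    [NormedAddCommGroup H] [InnerProductSpace ℂ H] [CompleteSpace H]
    [NormedAddCommGroup K] [InnerProductSpace ℂ K] [CompleteSpace K]
    (hdim : 1 < Module.rank ℂ H)
    (φ : (K →L[ℂ] H) →ₗ[ℂ] (K →L[ℂ] H))
    (h : ∀ (T : H →L[ℂ] H) (S : K →L[ℂ] H), T.comp S = 0 → T.comp (φ S) = 0) :
    ∀ (x : H) (g : K), ∃ ω : K,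
      φ ((innerSL ℂ g).smulRight x) = (innerSL ℂ ω).smulRight x := by
  intro x g
  by_cases hx : x = 0
  · refine ⟨0, ?_⟩
    have h0 : (innerSL ℂ g).smulRight x = 0 := by
      ext y; simp [hx]
    have h0' : (innerSL ℂ (0 : K)).smulRight x = 0 := by
      ext y; simp
    rw [h0, h0', map_zero]
  · set S : K →L[ℂ] H := (innerSL ℂ g).smulRight x with hS
    -- range of φ S lies in ℂ ∙ x
    have hmem : ∀ y : K, φ S y ∈ (ℂ ∙ x) := by
      intro y
      rw [← Submodule.orthogonal_orthogonal (ℂ ∙ x)]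
      intro z hz
      have hxz : ⟪x, z⟫ = 0 := hz x (Submodule.mem_span_singleton_self x)
      have hTS : ((innerSL ℂ z).smulRight z).comp S = 0 := by
        ext w
        have : ⟪z, x⟫ = 0 := by
          rw [← inner_conj_symm, hxz, map_zero]
        simp [hS, this, inner_smul_right]
      have := h _ S hTS
      have h2 : ⟪z, φ S y⟫ • z = 0 := by
        have := congrFun (congrArg (fun (f : K →L[ℂ] H) => (f : K → H)) this) y
        simpa using this
      rcases smul_eq_zero.mp h2 with h3 | h3
      · exact h3
      · simp [h3]
    -- define ω via the adjoint
    refine ⟨((‖x‖ : ℂ) ^ 2)⁻¹ • (ContinuousLinearMap.adjoint (φ S)) x, ?_⟩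
    ext y
    rcases Submodule.mem_span_singleton.mp (hmem y) with ⟨a, ha⟩
    have hxx : ⟪x, x⟫ = (‖x‖ : ℂ) ^ 2 := by
      rw [inner_self_eq_norm_sq_to_K]; norm_cast
    have hnz : ((‖x‖ : ℂ) ^ 2) ≠ 0 := by
      simp [hx, norm_eq_zero]
    have hinner : ⟪x, φ S y⟫ = a * (‖x‖ : ℂ) ^ 2 := by
      rw [← ha, inner_smul_right, hxx]
    have hadj : ⟪(ContinuousLinearMap.adjoint (φ S)) x, y⟫ = ⟪x, φ S y⟫ :=
      ContinuousLinearMap.adjoint_inner_left _ _ _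
    have hωy : ⟪((‖x‖ : ℂ) ^ 2)⁻¹ • (ContinuousLinearMap.adjoint (φ S)) x, y⟫ = a := by
      rw [inner_smul_left, hadj, hinner]
      have : (starRingEnd ℂ) (((‖x‖ : ℂ) ^ 2)⁻¹) = ((‖x‖ : ℂ) ^ 2)⁻¹ := by
        simp [Complex.conj_ofReal, ← Complex.ofReal_pow]
      rw [this]
      field_simp
      exact mul_div_cancel_left₀ a (Complex.ofReal_ne_zero.mpr (norm_ne_zero_iff.mpr hx))
    simp only [ContinuousLinearMap.smulRight_apply, innerSL_apply_apply]
    rw [hωy, ← ha]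
end

section
/- Let H, K be complex Hilbert spaces with dim H > 1, and let φ : B(K, H) → B(K, H) be a linear map, continuous in the strong operator topology on bounded sets, such that T φ(S) = 0 for all T in B(H), S in B(K, H) with TS = 0. Then there exists D in B(K) such that φ(S) = S D for all S in B(K, H). -/
set_option synthInstance.maxHeartbeats 400000
set_option maxHeartbeats 800000

open Filter Topology

local notation "⟪" x ", " y "⟫" => @inner ℂ _ _ x y
noncomputable def rk1 {H K : Type*}
    [NormedAddCommGroup H] [InnerProductSpace ℂ H]
    [NormedAddCommGroup K] [InnerProductSpace ℂ K] (x : H) (y : K) : K →L[ℂ] H :=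
  (innerSL ℂ y).smulRight x
lemma rk1_apply {H K : Type*}
    [NormedAddCommGroup H] [InnerProductSpace ℂ H]
    [NormedAddCommGroup K] [InnerProductSpace ℂ K] (x : H) (y : K) (u : K) :
    rk1 x y u = ⟪y, u⟫ • x := rfl
lemma exists_not_mem_span {H : Type*} [NormedAddCommGroup H] [InnerProductSpace ℂ H]
    (hdim : 1 < Module.rank ℂ H) (w : H) : ∃ x : H, x ∉ (ℂ ∙ w : Submodule ℂ H) := by
  by_contra hc
  push_neg at hc
  have htop : (ℂ ∙ w : Submodule ℂ H) = ⊤ := Submodule.eq_top_iff'.mpr hc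
  have h2 : Module.rank ℂ H ≤ 1 := by
    have h1 := rank_span_le (R := ℂ) ({w} : Set H)
    rw [Cardinal.mk_singleton] at h1
    rwa [show Submodule.span ℂ {w} = (ℂ ∙ w : Submodule ℂ H) from rfl, htop, rank_top] at h1
  exact absurd hdim (not_lt.mpr h2)
lemma eq_smul_of_inner_orth {H : Type*} [NormedAddCommGroup H] [InnerProductSpace ℂ H]
    [CompleteSpace H] (w p : H) (hp : ∀ v : H, ⟪v, w⟫ = 0 → ⟪v, p⟫ = 0) :
    ∃ c : ℂ, p = c • w := by
  have hmem : p ∈ ((ℂ ∙ w : Submodule ℂ H)ᗮ)ᗮ := by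
    rw [Submodule.mem_orthogonal]
    intro v hv
    refine hp v ?_
    have h1 := (Submodule.mem_orthogonal (ℂ ∙ w) v).mp hv w (Submodule.mem_span_singleton_self w)
    rw [← inner_conj_symm, h1, map_zero]
  rw [Submodule.orthogonal_orthogonal] at hmem
  obtain ⟨c, hc⟩ := Submodule.mem_span_singleton.mp hmem
  exact ⟨c, hc.symm⟩


/-- If `dim H > 1` and `φ : B(K,H) → B(K,H)` is linear, continuous in the
strong operator topology on bounded sets, and `T φ(S) = 0` whenever `T S = 0`
(`T ∈ B(H)`), then there is `D ∈ B(K)` with `φ(S) = S D` for all `S`. -/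
theorem stmt9 {H K : Type*}
    [NormedAddCommGroup H] [InnerProductSpace ℂ H] [CompleteSpace H]
    [NormedAddCommGroup K] [InnerProductSpace ℂ K] [CompleteSpace K]
    (hdim : 1 < Module.rank ℂ H)
    (φ : (K →L[ℂ] H) →ₗ[ℂ] (K →L[ℂ] H))
    (hcont : ∀ (S : ℕ → (K →L[ℂ] H)) (S₀ : K →L[ℂ] H), (∃ C : ℝ, ∀ n, ‖S n‖ ≤ C) →
      (∀ y : K, Tendsto (fun n => S n y) atTop (𝓝 (S₀ y))) →
      ∀ y : K, Tendsto (fun n => φ (S n) y) atTop (𝓝 (φ S₀ y)))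
    (h : ∀ (T : H →L[ℂ] H) (S : K →L[ℂ] H), T.comp S = 0 → T.comp (φ S) = 0) :
    ∃ D : K →L[ℂ] K, ∀ S : K →L[ℂ] H, φ S = S.comp D := by
  classical
  -- a unit vector e in H
  obtain ⟨e0, he0⟩ := exists_not_mem_span hdim 0
  have he0' : e0 ≠ 0 := fun h0 => he0 (by rw [h0]; exact Submodule.zero_mem _)
  set e : H := ‖e0‖⁻¹ • e0 with hedef
  have he : ‖e‖ = 1 := by
    rw [hedef, norm_smul, norm_inv, norm_norm, inv_mul_cancel₀ (norm_ne_zero_iff.mpr he0')]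
  have hene : e ≠ 0 := by
    intro h0; rw [h0, norm_zero] at he; norm_num at he
  have hee : (⟪e, e⟫ : ℂ) = 1 := by
    rw [inner_self_eq_norm_sq_to_K, he]; norm_num
  -- key consequence of h
  have key : ∀ (v : H) (S : K →L[ℂ] H), (∀ u, ⟪v, S u⟫ = 0) → ∀ u, ⟪v, φ S u⟫ = 0 := by
    intro v S hvS u
    rcases eq_or_ne v 0 with rfl | hv
    · simp
    · have hTS : (rk1 v v).comp S = 0 := by
        ext u'; simp [rk1_apply, hvS u']
      have h2 : (rk1 v v) (φ S u) = 0 := by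
        rw [← ContinuousLinearMap.comp_apply, h (rk1 v v) S hTS]; rfl
      rw [rk1_apply] at h2
      rcases smul_eq_zero.mp h2 with h3 | h3
      · exact h3
      · exact absurd h3 hv
  -- the range of φ (rk1 x y) is contained in ℂ x
  have range1 : ∀ (x : H) (y : K) (u : K), ∃ c : ℂ, φ (rk1 x y) u = c • x := by
    intro x y u
    refine eq_smul_of_inner_orth x _ (fun v hvx => key v _ (fun u' => ?_) u)
    rw [rk1_apply, inner_smul_right, hvx, mul_zero]
  -- the map g
  set g : K → K := fun y => (ContinuousLinearMap.adjoint (φ (rk1 e y))) e with hgdef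
  have hgspec : ∀ (y u : K), φ (rk1 e y) u = ⟪g y, u⟫ • e := by
    intro y u
    obtain ⟨c, hc⟩ := range1 e y u
    have hcu : ⟪g y, u⟫ = c := by
      rw [hgdef]
      simp only []
      rw [ContinuousLinearMap.adjoint_inner_left, hc, inner_smul_right, hee, mul_one]
    rw [hcu, hc]
  -- φ acts on all rank ones via g
  have hrk : ∀ (x : H) (y : K) (u : K), φ (rk1 x y) u = ⟪g y, u⟫ • x := by
    intro x y u
    by_cases hx : x ∈ (ℂ ∙ e : Submodule ℂ H)
    · obtain ⟨c, rfl⟩ := Submodule.mem_span_singleton.mp hx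
      have hlin : rk1 (c • e) y = c • rk1 e y := by
        ext u'; simp [rk1_apply, smul_smul, mul_comm]
      rw [hlin, map_smul, ContinuousLinearMap.smul_apply, hgspec, smul_smul, smul_smul, mul_comm]
    · obtain ⟨cx, hcx⟩ := range1 x y u
      have hadd : rk1 (x + e) y = rk1 x y + rk1 e y := by
        ext u'; simp [rk1_apply, smul_add]
      obtain ⟨d, hd⟩ := range1 (x + e) y u
      have hsum : d • x + d • e = cx • x + ⟪g y, u⟫ • e := by
        rw [← smul_add, ← hd, hadd, map_add, ContinuousLinearMap.add_apply, hcx, hgspec]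
      rcases eq_or_ne d cx with rfl | hdc
      · have h5 : d • e = ⟪g y, u⟫ • e := add_left_cancel hsum
        have h6 : d = ⟪g y, u⟫ := smul_left_injective ℂ hene h5
        rw [hcx, ← h6]
      · exfalso
        apply hx
        have h4 : (d - cx) • x = (⟪g y, u⟫ - d) • e := by
          rw [sub_smul, sub_smul]
          have h7 := congrArg (fun t => t - cx • x - d • e) hsum
          rw [sub_eq_add_neg (d • x)]
          simpa [add_sub_assoc, sub_sub_eq_add_sub, sub_sub] using h7
        have : x = ((d - cx)⁻¹ * (⟪g y, u⟫ - d)) • e := by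
          rw [mul_smul, ← h4, smul_smul, inv_mul_cancel₀ (sub_ne_zero.mpr hdc), one_smul]
        rw [this]
        exact Submodule.smul_mem _ _ (Submodule.mem_span_singleton_self e)
  -- uniqueness helper: recover vector from its inners against e-coefficients
  have huniq : ∀ (a b : K), (∀ u : K, ⟪a, u⟫ • e = ⟪b, u⟫ • e) → a = b := by
    intro a b hab
    refine ext_inner_right ℂ (fun u => ?_)
    exact smul_left_injective ℂ hene (hab u)
  -- g is additive
  have hgadd : ∀ y₁ y₂ : K, g (y₁ + y₂) = g y₁ + g y₂ := by
    intro y₁ y₂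
    refine huniq _ _ (fun u => ?_)
    have hadd : rk1 e (y₁ + y₂) = rk1 e y₁ + rk1 e y₂ := by
      ext u'; simp [rk1_apply, inner_add_left, add_smul]
    rw [← hgspec, hadd, map_add, ContinuousLinearMap.add_apply, hgspec, hgspec,
      ← add_smul, ← inner_add_left]
  -- g commutes with scalars
  have hgsmul : ∀ (c : ℂ) (y : K), g (c • y) = c • g y := by
    intro c y
    refine huniq _ _ (fun u => ?_)
    have hsm : rk1 e (c • y) = (starRingEnd ℂ c) • rk1 e y := by
      ext u'; simp [rk1_apply, inner_smul_left, smul_smul, mul_comm]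
    rw [← hgspec, hsm, map_smul, ContinuousLinearMap.smul_apply, hgspec,
      inner_smul_left, smul_smul]
  -- bundle g as a linear map
  set gL : K →ₗ[ℂ] K :=
    { toFun := g, map_add' := hgadd, map_smul' := hgsmul } with hgL
  -- g is continuous via the closed graph theorem
  have hgcont : Continuous g := by
    have : Continuous gL := by
      apply gL.continuous_of_seq_closed_graph
      intro u x y hux huy
      -- the sequence of rank ones is bounded
      have hbdd : BddAbove (Set.range fun n => ‖u n‖) := hux.norm.bddAbove_range
      obtain ⟨C, hC⟩ := hbdd
      have hnorm : ∀ n, ‖rk1 e (u n)‖ ≤ C := by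
        intro n
        refine ContinuousLinearMap.opNorm_le_bound _ ?_ (fun w => ?_)
        · exact le_trans (norm_nonneg _) (hC ⟨n, rfl⟩)
        · rw [rk1_apply, norm_smul, he, mul_one]
          calc ‖(⟪u n, w⟫ : ℂ)‖ ≤ ‖u n‖ * ‖w‖ := norm_inner_le_norm _ _
            _ ≤ C * ‖w‖ := by
                have : ‖u n‖ ≤ C := hC ⟨n, rfl⟩
                exact mul_le_mul_of_nonneg_right this (norm_nonneg _)
      have hptw : ∀ w : K, Tendsto (fun n => rk1 e (u n) w) atTop (𝓝 (rk1 e x w)) := by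
        intro w
        simp only [rk1_apply]
        exact (hux.inner tendsto_const_nhds).smul_const e
      have hphi := hcont (fun n => rk1 e (u n)) (rk1 e x) ⟨C, hnorm⟩ hptw
      refine huniq _ _ (fun w => ?_)
      have h1 : Tendsto (fun n => φ (rk1 e (u n)) w) atTop (𝓝 (⟪g x, w⟫ • e)) := by
        rw [← hgspec]; exact hphi w
      have h2 : Tendsto (fun n => φ (rk1 e (u n)) w) atTop (𝓝 (⟪y, w⟫ • e)) := by
        have : Tendsto (fun n => (⟪g (u n), w⟫ : ℂ) • e) atTop (𝓝 (⟪y, w⟫ • e)) :=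
          ((huy.inner tendsto_const_nhds)).smul_const e
        refine this.congr (fun n => ?_)
        rw [hgspec]
      exact tendsto_nhds_unique h2 h1
    exact this
  set gC : K →L[ℂ] K := ⟨gL, hgcont⟩ with hgC
  set D : K →L[ℂ] K := ContinuousLinearMap.adjoint gC with hD
  have hDspec : ∀ (y z : K), ⟪g y, z⟫ = ⟪y, D z⟫ := by
    intro y z
    rw [hD, ContinuousLinearMap.adjoint_inner_right]
    rfl
  -- LEMMA A : φ S z is orthogonal to everything orthogonal to S (D z)
  have lemA : ∀ (S : K →L[ℂ] H) (z : K) (v : H), ⟪v, S (D z)⟫ = 0 → ⟪v, φ S z⟫ = 0 := by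
    intro S z v hv
    rcases eq_or_ne v 0 with rfl | hvne
    · simp
    · set y : K := ContinuousLinearMap.adjoint S v with hy
      have hyDz : ⟪g y, z⟫ = 0 := by
        rw [hDspec, hy, ContinuousLinearMap.adjoint_inner_left]
        exact hv
      set x : H := -((((‖v‖ : ℂ)) ^ 2)⁻¹) • v with hx
      have hxv : ⟪v, x⟫ = -1 := by
        rw [hx, inner_smul_right, inner_self_eq_norm_sq_to_K]
        have hnv : ((‖v‖ : ℂ)) ^ 2 ≠ 0 := by
          simp [hvne]
        field_simp
        exact congrArg Neg.neg (div_self hnv)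
      have hTS : (rk1 v v).comp (S + rk1 x y) = 0 := by
        ext u
        have h1 : ⟪v, S u⟫ = ⟪y, u⟫ := by
          rw [hy, ContinuousLinearMap.adjoint_inner_left]
        simp only [ContinuousLinearMap.comp_apply, ContinuousLinearMap.add_apply,
          rk1_apply, ContinuousLinearMap.zero_apply]
        have hz : (⟪y, u⟫ + ⟪y, u⟫ * (-1) : ℂ) = 0 := by ring
        rw [inner_add_right, inner_smul_right, hxv, h1, hz, zero_smul]
      have h2 : (rk1 v v) (φ (S + rk1 x y) z) = 0 := by
        rw [← ContinuousLinearMap.comp_apply, h _ _ hTS]; rfl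
      rw [rk1_apply] at h2
      have h3 : ⟪v, φ (S + rk1 x y) z⟫ = 0 := by
        rcases smul_eq_zero.mp h2 with h3 | h3
        · exact h3
        · exact absurd h3 hvne
      rw [map_add, ContinuousLinearMap.add_apply, inner_add_right] at h3
      rw [hrk, hyDz, zero_smul, inner_zero_right, add_zero] at h3
      exact h3
  -- conclusion
  refine ⟨D, fun S => ?_⟩
  ext z
  rw [ContinuousLinearMap.comp_apply]
  rcases eq_or_ne (S (D z)) 0 with hw | hw
  · rw [hw]
    exact inner_self_eq_zero.mp (lemA S z (φ S z) (by rw [hw, inner_zero_right]))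
  · obtain ⟨c, hc⟩ := eq_smul_of_inner_orth (S (D z)) (φ S z) (fun v hv => lemA S z v hv)
    obtain ⟨x, hxns⟩ := exists_not_mem_span hdim (S (D z))
    have hDz : D z ≠ 0 := by
      intro h0; rw [h0, map_zero] at hw; exact hw rfl
    set r : ℂ := ⟪(D z : K), D z⟫ with hrdef
    have hr : r ≠ 0 := by
      rw [hrdef, Ne, inner_self_eq_zero]; exact hDz
    have hgDz : ⟪g (D z), z⟫ = r := by
      rw [hDspec]
    have hS'Dz : (S + rk1 x (D z)) (D z) = S (D z) + r • x := by
      rw [ContinuousLinearMap.add_apply, rk1_apply]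
    obtain ⟨μ, hμ⟩ := eq_smul_of_inner_orth ((S + rk1 x (D z)) (D z))
      (φ (S + rk1 x (D z)) z) (fun v hv => lemA _ z v hv)
    rw [map_add, ContinuousLinearMap.add_apply, hc, hrk, hgDz, hS'Dz, smul_add, smul_smul] at hμ
    have hμ1 : μ = 1 := by
      by_contra hμn
      apply hxns
      have h4 : (c - μ) • S (D z) = (μ * r - r) • x := by
        rw [sub_smul, sub_smul]
        have h7 := congrArg (fun t => t - μ • S (D z) - r • x) hμ
        rw [sub_eq_add_neg (c • S (D z))]
        simpa [add_sub_assoc, sub_sub_eq_add_sub, sub_sub] using h7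
      have hμr : (μ * r - r) ≠ 0 := by
        intro h0
        have h6 : (μ - 1) * r = 0 := by linear_combination h0
        rcases mul_eq_zero.mp h6 with h5 | h5
        · exact hμn (sub_eq_zero.mp h5)
        · exact hr h5
      have hx2 : x = ((μ * r - r)⁻¹ * (c - μ)) • S (D z) := by
        rw [mul_smul, h4, smul_smul, inv_mul_cancel₀ hμr, one_smul]
      rw [hx2]
      exact Submodule.smul_mem _ _ (Submodule.mem_span_singleton_self _)
    rw [hμ1, one_smul, one_mul] at hμ
    have hcw : c • S (D z) = S (D z) := by
      have h8 := congrArg (fun t => t - r • x) hμ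
      simpa using h8
    rw [hc, hcw]
end

section
/- Let H, K be complex Hilbert spaces with dim K > 1, and let φ : B(K, H) → B(K, H) be a linear map, SOT-continuous, such that φ(S) T = 0 for all T in B(K) and S in B(K, H) with ST = 0. Then there exists D' in B(H) such that φ(S) = D' S for all S in B(K, H). -/
set_option synthInstance.maxHeartbeats 400000
set_option maxHeartbeats 800000

open Filter Topology

open scoped InnerProductSpace

/-- If `dim K > 1` and `φ : B(K,H) → B(K,H)` is linear, SOT-continuous,
and `φ(S) T = 0` whenever `S T = 0` (`T ∈ B(K)`), then there is `D' ∈ B(H)` with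
`φ(S) = D' S` for all `S`. -/
theorem stmt10 {H K : Type*}
    [NormedAddCommGroup H] [InnerProductSpace ℂ H] [CompleteSpace H]
    [NormedAddCommGroup K] [InnerProductSpace ℂ K] [CompleteSpace K]
    (hdim : 1 < Module.rank ℂ K)
    (φ : (K →L[ℂ] H) →ₗ[ℂ] (K →L[ℂ] H))
    (hcont : ∀ (S : ℕ → (K →L[ℂ] H)) (S₀ : K →L[ℂ] H),
      (∀ y : K, Tendsto (fun n => S n y) atTop (𝓝 (S₀ y))) →
      ∀ y : K, Tendsto (fun n => φ (S n) y) atTop (𝓝 (φ S₀ y)))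
    (h : ∀ (S : K →L[ℂ] H) (T : K →L[ℂ] K), S.comp T = 0 → (φ S).comp T = 0) :
    ∃ D' : H →L[ℂ] H, ∀ S : K →L[ℂ] H, φ S = D'.comp S := by
  classical
  -- Lemma A : if `S e = 0` with `e ≠ 0`, then `φ S e = 0`.
  have hA : ∀ (S : K →L[ℂ] H) (e : K), e ≠ 0 → S e = 0 → φ S e = 0 := by
    intro S e he hSe
    have hT : S.comp ((innerSL ℂ e).smulRight e) = 0 := by
      ext x
      simp [hSe]
    have h0 := h S _ hT
    have h2 : ((φ S).comp ((innerSL ℂ e).smulRight e)) e = 0 := by rw [h0]; rfl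
    rw [ContinuousLinearMap.comp_apply, ContinuousLinearMap.smulRight_apply,
      innerSL_apply_apply, map_smul] at h2
    have hne : (⟪e, e⟫_ℂ) ≠ 0 := inner_self_ne_zero.mpr he
    exact (smul_eq_zero.mp h2).resolve_left hne
  -- Lemma M : if `e ≠ 0`, `y ∉ span {e}`, and `S e = S'' y`, then `φ S e = φ S'' y`.
  have hM : ∀ (S S'' : K →L[ℂ] H) (e y : K), e ≠ 0 → y ∉ Submodule.span ℂ {e} →
      S e = S'' y → φ S e = φ S'' y := by
    intro S S'' e y he hy hSe
    have hy0 : y ≠ 0 := fun hh => hy (hh ▸ Submodule.zero_mem _)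
    have hee : (⟪e, e⟫_ℂ) ≠ 0 := inner_self_ne_zero.mpr he
    set v : K := y - (⟪e, y⟫_ℂ / ⟪e, e⟫_ℂ) • e with hvdef
    have hv : v ≠ 0 := by
      intro hh
      apply hy
      exact Submodule.mem_span_singleton.mpr ⟨_, (sub_eq_zero.mp hh).symm⟩
    have hvv : (⟪v, v⟫_ℂ) ≠ 0 := inner_self_ne_zero.mpr hv
    have hve : (⟪v, e⟫_ℂ) = 0 := by
      simp only [hvdef, inner_sub_left, inner_smul_left, map_div₀, inner_conj_symm]
      field_simp
      ring
    have hvy : (⟪v, y⟫_ℂ) = ⟪v, v⟫_ℂ := by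
      have : (⟪v, y - v⟫_ℂ) = 0 := by
        have : y - v = (⟪e, y⟫_ℂ / ⟪e, e⟫_ℂ) • e := by rw [hvdef]; abel
        rw [this, inner_smul_right, hve, mul_zero]
      have h3 : (⟪v, y⟫_ℂ) - (⟪v, v⟫_ℂ) = 0 := by rw [← inner_sub_right]; exact this
      exact sub_eq_zero.mp h3
    set f : K →L[ℂ] ℂ := (⟪e, e⟫_ℂ)⁻¹ • innerSL ℂ e +
      ((1 - ⟪e, y⟫_ℂ / ⟪e, e⟫_ℂ) / ⟪v, v⟫_ℂ) • innerSL ℂ v with hfdef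
    have hfe : f e = 1 := by
      simp only [hfdef, ContinuousLinearMap.add_apply, ContinuousLinearMap.smul_apply,
        innerSL_apply_apply, smul_eq_mul]
      rw [hve]
      field_simp
      ring
    have hfy : f y = 1 := by
      simp only [hfdef, ContinuousLinearMap.add_apply, ContinuousLinearMap.smul_apply,
        innerSL_apply_apply, smul_eq_mul, hvy]
      field_simp
      ring
    set S₀ : K →L[ℂ] H := f.smulRight (S e) with hS0def
    have e1 : φ S e = φ S₀ e := by
      have hd : (S - S₀) e = 0 := by
        simp [hS0def, hfe]
      have := hA (S - S₀) e he hd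
      rw [map_sub] at this
      exact sub_eq_zero.mp (by simpa using this)
    have e2 : φ S'' y = φ S₀ y := by
      have hd : (S'' - S₀) y = 0 := by
        simp [hS0def, hfy, ← hSe]
      have := hA (S'' - S₀) y hy0 hd
      rw [map_sub] at this
      exact sub_eq_zero.mp (by simpa using this)
    have e3 : φ S₀ e = φ S₀ y := by
      have hey : e - y ≠ 0 := by
        intro hh
        apply hy
        rw [← sub_eq_zero.mp hh]
        exact Submodule.mem_span_singleton_self e
      have hd : S₀ (e - y) = 0 := by
        simp [hS0def, map_sub, hfe, hfy]
      have := hA S₀ (e - y) hey hd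
      rw [map_sub] at this
      exact sub_eq_zero.mp (by simpa using this)
    rw [e1, e3, ← e2]
  -- existence of a vector outside any singleton span
  have hz : ∀ e : K, ∃ z : K, z ∉ Submodule.span ℂ {e} := by
    intro e
    by_contra hc
    push_neg at hc
    have htop : Submodule.span ℂ {e} = ⊤ := Submodule.eq_top_iff'.mpr hc
    have h1 : Module.rank ℂ K ≤ 1 := by
      have := rank_span_le (R := ℂ) ({e} : Set K)
      rw [htop] at this
      simpa using this
    exact absurd h1 (not_le.mpr hdim)
  -- Lemma W : if `e ≠ 0`, `y ≠ 0`, `S y = S' e`, then `φ S y = φ S' e`.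
  have hW : ∀ (S S' : K →L[ℂ] H) (e y : K), e ≠ 0 → y ≠ 0 →
      S y = S' e → φ S y = φ S' e := by
    intro S S' e y he hy hSy
    by_cases hmem : y ∈ Submodule.span ℂ {e}
    · obtain ⟨z, hz'⟩ := hz e
      have hzy : z ∉ Submodule.span ℂ {y} := by
        intro hcz
        exact hz' (Submodule.span_le.mpr (by simpa using hmem) hcz)
      have hz0 : z ≠ 0 := fun hh => hz' (hh ▸ Submodule.zero_mem _)
      have hzz : (⟪z, z⟫_ℂ) ≠ 0 := inner_self_ne_zero.mpr hz0
      set S₀ : K →L[ℂ] H := ((⟪z, z⟫_ℂ)⁻¹ • innerSL ℂ z).smulRight (S y) with hS0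
      have hS0z : S₀ z = S y := by
        simp only [hS0, ContinuousLinearMap.smulRight_apply, ContinuousLinearMap.smul_apply,
          innerSL_apply_apply, smul_eq_mul, inv_mul_cancel₀ hzz, one_smul]
      have h1 := hM S' S₀ e z he hz' (by rw [← hSy, hS0z])
      have h2 := hM S S₀ y z hy hzy hS0z.symm
      rw [h2, ← h1]
    · exact (hM S' S e y he hmem hSy.symm).symm
  -- fix a nonzero vector e₀
  obtain ⟨e₀, he₀'⟩ := hz (0 : K)
  have he₀ : e₀ ≠ 0 := fun hh => he₀' (by rw [hh]; exact Submodule.zero_mem _)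
  have hee : (⟪e₀, e₀⟫_ℂ) ≠ 0 := inner_self_ne_zero.mpr he₀
  set g : K →L[ℂ] ℂ := (⟪e₀, e₀⟫_ℂ)⁻¹ • innerSL ℂ e₀ with hgdef
  have hge : g e₀ = 1 := by
    simp only [hgdef, ContinuousLinearMap.smul_apply, innerSL_apply_apply, smul_eq_mul,
      inv_mul_cancel₀ hee]
  have hadd : ∀ a b : H, g.smulRight (a + b) = g.smulRight a + g.smulRight b := by
    intro a b; ext x; simp [smul_add]
  have hsmul : ∀ (c : ℂ) (a : H), g.smulRight (c • a) = c • g.smulRight a := by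
    intro c a
    ext x
    simp only [ContinuousLinearMap.smulRight_apply, ContinuousLinearMap.smul_apply]
    rw [smul_comm]
  set L : H →ₗ[ℂ] H :=
    { toFun := fun x => φ (g.smulRight x) e₀
      map_add' := fun a b => by
        show φ (g.smulRight (a + b)) e₀ = φ (g.smulRight a) e₀ + φ (g.smulRight b) e₀
        rw [hadd, map_add]; rfl
      map_smul' := fun c a => by
        show φ (g.smulRight (c • a)) e₀ = c • φ (g.smulRight a) e₀
        rw [hsmul, map_smul]; rfl } with hLdef
  have hLc : Continuous L := by
    apply L.continuous_of_seq_closed_graph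
    intro u x y hu huy
    have h1 : ∀ w : K, Tendsto (fun n => (g.smulRight (u n)) w) atTop
        (𝓝 ((g.smulRight x) w)) := by
      intro w
      simp only [ContinuousLinearMap.smulRight_apply]
      exact hu.const_smul (g w)
    have h2 := hcont (fun n => g.smulRight (u n)) (g.smulRight x) h1 e₀
    exact tendsto_nhds_unique huy h2
  refine ⟨⟨L, hLc⟩, ?_⟩
  intro S
  ext y
  by_cases hy : y = 0
  · subst hy; simp
  · show φ S y = L (S y)
    have hL : L (S y) = φ (g.smulRight (S y)) e₀ := rfl
    rw [hL]
    apply hW S (g.smulRight (S y)) e₀ y he₀ hy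
    simp [hge]
end

section
/- Let n ≥ 2 and let A = T(n, ℂ) be the algebra of upper triangular n×n complex matrices. Suppose δ : A → A is a linear map with δ(I) = 0 satisfying δ(S₁)S₂ + S₁δ(S₂) = 0 for all S₁, S₂ in A with S₁S₂ = I. Then for every idempotent P in A, δ(P) = δ(P)P + Pδ(P). -/
set_option maxHeartbeats 1000000
set_option synthInstance.maxHeartbeats 400000


/-- For `n ≥ 2` and `A = T(n, ℂ)`, if `δ : A → A` is linear with
`δ(I) = 0` and `δ(S₁) S₂ + S₁ δ(S₂) = 0` whenever `S₁ S₂ = I`, then for every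
idempotent `P` in `A` we have `δ(P) = δ(P) P + P δ(P)`. -/
theorem stmt11 (n : ℕ) (hn : 2 ≤ n)
    (δ : upperTriangularAlg n →ₗ[ℂ] upperTriangularAlg n) (hI : δ 1 = 0)
    (h : ∀ S₁ S₂ : upperTriangularAlg n, S₁ * S₂ = 1 → δ S₁ * S₂ + S₁ * δ S₂ = 0) :
    ∀ P : upperTriangularAlg n, P * P = P → δ P = δ P * P + P * δ P := by
  intro P hP
  set a : ℂ := (1 + Complex.I * Real.sqrt 3) / 2 with ha
  have h3 : (Complex.I * (Real.sqrt 3 : ℝ)) ^ 2 = -3 := by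
    have h3' : ((Real.sqrt 3 : ℝ) : ℂ) ^ 2 = 3 := by
      norm_cast
      rw [Real.sq_sqrt] <;> norm_num
    rw [mul_pow, Complex.I_sq, h3']; ring
  have hab : a * (1 - a) = 1 := by
    rw [ha]; linear_combination (-1/4 : ℂ) * h3
  set S₁ : upperTriangularAlg n := 1 - a • P with hS1
  set S₂ : upperTriangularAlg n := 1 - (1 - a) • P with hS2
  have key : (a • P) * ((1 - a) • P) = P := by
    rw [smul_mul_assoc a P ((1-a) • P), mul_smul_comm (1-a) P P, smul_smul, hab, hP, one_smul]
  have hS : S₁ * S₂ = 1 := by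
    rw [hS1, hS2, sub_mul, one_mul, mul_sub, mul_one, key]
    module
  have d1 : δ S₁ = -(a • δ P) := by
    rw [hS1, map_sub, map_smul, hI, zero_sub]
  have d2 : δ S₂ = -((1 - a) • δ P) := by
    rw [hS2, map_sub, map_smul, hI, zero_sub]
  have key1 : (a • δ P) * ((1 - a) • P) = δ P * P := by
    rw [smul_mul_assoc a (δ P) ((1-a) • P), mul_smul_comm (1-a) (δ P) P, smul_smul, hab, one_smul]
  have key2 : (a • P) * ((1 - a) • δ P) = P * δ P := by
    rw [smul_mul_assoc a P ((1-a) • δ P), mul_smul_comm (1-a) P (δ P), smul_smul, hab, one_smul]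
  have expand : δ S₁ * S₂ + S₁ * δ S₂ = (δ P * P + P * δ P) - δ P := by
    rw [d1, d2, hS1, hS2]
    have key1' : -(a • δ P) * ((1 - a) • P) = -(δ P * P) := by
      rw [← key1]; exact neg_mul (a • δ P) ((1 - a) • P)
    have key2' : (a • P) * -((1 - a) • δ P) = -(P * δ P) := by
      rw [← key2]; exact mul_neg (a • P) ((1 - a) • δ P)
    simp only [neg_mul, mul_neg, mul_sub, sub_mul, one_mul, mul_one, key1', key2']
    module
  have heq := h S₁ S₂ hS
  rw [expand, sub_eq_zero] at heq
  exact heq.symm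
end

section
/- Let n ≥ 2, let A = T(n, ℂ) be the upper triangular n×n matrices, and fix an invertible W ∈ A. Let Ω = W (so Ω is an invertible element of A). If φ : A → A is a linear map satisfying φ(S)T + Sφ(T) = φ(Ω) for all S, T ∈ A with ST = Ω, then φ is an inner derivation: there exists G ∈ Matₙ(ℂ) with φ(X) = XG − GX for all X ∈ A, and moreover G can be chosen in A. -/
set_option synthInstance.maxHeartbeats 1000000
set_option maxHeartbeats 4000000

namespace Stmt15Aux
open Matrix

variable {n : ℕ}

lemma stdBM_mem {i j : Fin n} (hij : i ≤ j) :
    Matrix.single i j (1:ℂ) ∈ upperTriangularAlg n := by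
  intro k l hkl
  apply Matrix.single_apply_of_ne
  rintro ⟨rfl, rfl⟩
  exact absurd hij (not_le.mpr hkl)

/-- matrix units inside the subalgebra (zero if below diagonal) -/
noncomputable def Ee (i j : Fin n) : upperTriangularAlg n :=
  if h : i ≤ j then ⟨Matrix.single i j 1, stdBM_mem h⟩ else 0

lemma Ee_val {i j : Fin n} (h : i ≤ j) :
    ((Ee i j : upperTriangularAlg n) : Matrix (Fin n) (Fin n) ℂ) = Matrix.single i j 1 := by
  simp [Ee, h]

lemma Ee_mul_same {i j k : Fin n} (hij : i ≤ j) (hjk : j ≤ k) :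
    (Ee i j : upperTriangularAlg n) * Ee j k = Ee i k := by
  apply Subtype.ext
  push_cast [Ee_val hij, Ee_val hjk, Ee_val (hij.trans hjk)]
  simp

lemma Ee_mul_of_ne {i j k l : Fin n} (hij : i ≤ j) (hkl : k ≤ l) (hjk : j ≠ k) :
    (Ee i j : upperTriangularAlg n) * Ee k l = 0 := by
  apply Subtype.ext
  push_cast [Ee_val hij, Ee_val hkl]
  rw [Matrix.single_mul_single_of_ne (c := (1:ℂ)) i j k hjk]

lemma span_units (L : upperTriangularAlg n →ₗ[ℂ] upperTriangularAlg n)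
    (h0 : ∀ i j, L (Ee i j) = 0) (X : upperTriangularAlg n) : L X = 0 := by
  have hX : X = ∑ i : Fin n, ∑ j : Fin n, ((X : Matrix (Fin n) (Fin n) ℂ) i j) • Ee i j := by
    apply Subtype.ext
    push_cast
    nth_rewrite 1 [Matrix.matrix_eq_sum_single (X : Matrix (Fin n) (Fin n) ℂ)]
    refine Finset.sum_congr rfl fun i _ => Finset.sum_congr rfl fun j _ => ?_
    by_cases hij : i ≤ j
    · rw [Ee_val hij, smul_single, smul_eq_mul, mul_one]
    · have hx : (X : Matrix (Fin n) (Fin n) ℂ) i j = 0 := X.2 (not_le.mp hij)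
      simp [hx]
  rw [hX]
  simp [h0]

lemma key_nil {A : Type*} [Ring A] [Algebra ℂ A] (φ : A →ₗ[ℂ] A) (W : A)
    (h : ∀ S T : A, S * T = W → φ S * T + S * φ T = φ W)
    (hφ1 : φ 1 = 0) (x : A) (hx3 : x * x * x = 0) :
    φ (W * x) = φ W * x + W * φ x ∧ φ (W * x * x) = φ (W*x) * x + W * x * φ x := by
  have inst : ∀ t : ℂ,
      t • (φ W * x + W * φ x - φ (W*x))
      + (t*t) • (φ (W*x*x) - φ (W*x) * x - W * x * φ x)
      + (t*t*t) • (φ (W*x*x) * x + W * x * x * φ x) = 0 := by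
    intro t
    have hST : (W * (1 - t•x + (t*t)•(x*x))) * (1 + t•x) = W := by
      rw [mul_assoc]
      have : (1 - t•x + (t*t)•(x*x)) * (1 + t•x) = 1 := by
        simp only [add_mul, sub_mul, mul_add, mul_one, one_mul, smul_mul_assoc,
          mul_smul_comm, smul_smul, ← mul_assoc, hx3, smul_zero]
        module
      rw [this, mul_one]
    have e := h _ _ hST
    simp only [mul_sub, mul_add, mul_one, map_add, map_sub, _root_.map_smul, hφ1,
      mul_smul_comm, smul_mul_assoc, sub_mul, add_mul, one_mul, smul_add, smul_sub,
      smul_smul, add_zero, smul_zero, mul_zero, zero_add, ← mul_assoc] at e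
    linear_combination (norm := module) e
  have h1 := inst 1
  have h2 := inst (-1)
  have h3 := inst 2
  norm_num at h1 h2 h3
  set a1 := φ W * x + W * φ x - φ (W*x) with ha1
  set a2 := φ (W*x*x) - φ (W*x) * x - W * x * φ x with ha2
  set a3 := φ (W*x*x) * x + W * x * x * φ x with ha3
  have e2 : (2:ℂ) • a2 = 0 := by linear_combination (norm := module) h1 + h2
  have ha2z : a2 = 0 :=
    smul_right_injective A (by norm_num : (2:ℂ) ≠ 0)
      (by rw [e2, smul_zero] : (2:ℂ)•a2 = (2:ℂ)•(0:A))
  have e13 : (2:ℂ) • a1 + (2:ℂ) • a3 = 0 := by linear_combination (norm := module) h1 - h2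
  have e3' : (2:ℂ) • a1 + (8:ℂ) • a3 = 0 := by
    rw [ha2z] at h3; linear_combination (norm := module) h3
  have e6 : (6:ℂ) • a3 = 0 := by linear_combination (norm := module) e3' - e13
  have ha3z : a3 = 0 :=
    smul_right_injective A (by norm_num : (6:ℂ) ≠ 0)
      (by rw [e6, smul_zero] : (6:ℂ)•a3 = (6:ℂ)•(0:A))
  have ha1z : a1 = 0 := by
    rw [ha3z, smul_zero, add_zero] at e13
    exact smul_right_injective A (by norm_num : (2:ℂ) ≠ 0)
      (by rw [e13, smul_zero] : (2:ℂ)•a1 = (2:ℂ)•(0:A))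
  constructor
  · rw [← sub_eq_zero]; rw [← neg_eq_zero, ← ha1z, ha1]; abel
  · rw [← sub_eq_zero, ← ha2z, ha2]; abel

lemma key_idem {A : Type*} [Ring A] [Algebra ℂ A] (φ : A →ₗ[ℂ] A) (W : A)
    (h : ∀ S T : A, S * T = W → φ S * T + S * φ T = φ W)
    (hφ1 : φ 1 = 0) (x : A) (hx2 : x * x = x) :
    φ (W * x) = φ W * x + W * φ x ∧ φ (W*x) * x + W * x * φ x = φ (W*x) := by
  have inst : ∀ t s : ℂ, t - s - s*t = 0 →
      t • (φ W * x + W * φ x)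
      - s • (φ (W*x))
      - (s*t) • (φ (W*x) * x + W * x * φ x) = 0 := by
    intro t s hts
    have hST : (W * (1 - s•x)) * (1 + t•x) = W := by
      rw [mul_assoc]
      have : (1 - s•x) * (1 + t•x) = (1:A) + (t - s - s*t) • x := by
        simp only [sub_mul, mul_add, mul_one, one_mul, smul_mul_assoc, mul_smul_comm,
          smul_smul, hx2]
        module
      rw [this, hts, zero_smul, add_zero, mul_one]
    have e := h _ _ hST
    simp only [mul_sub, mul_add, mul_one, map_add, map_sub, _root_.map_smul, hφ1,
      mul_smul_comm, smul_mul_assoc, sub_mul, add_mul, one_mul, smul_add, smul_sub,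
      smul_smul, add_zero, smul_zero, mul_zero, zero_add, ← mul_assoc] at e
    linear_combination (norm := module) e
  have e1 := inst (-1/2) (-1) (by norm_num)
  have e2 := inst (-2) 2 (by norm_num)
  norm_num at e1 e2
  set a := φ W * x + W * φ x with ha
  set b := φ (W*x) with hb
  set c := φ (W*x) * x + W * x * φ x with hc
  have k1 : (6:ℂ) • a = (6:ℂ) • b := by
    linear_combination (norm := module) (-8:ℂ) • e1 + (-1:ℂ) • e2
  have hab : a = b := smul_right_injective A (by norm_num : (6:ℂ) ≠ 0) k1
  have k2 : (3:ℂ) • c = (3:ℂ) • a := by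
    linear_combination (norm := module) (2:ℂ) • e1 + e2
  have hca : c = a := smul_right_injective A (by norm_num : (3:ℂ) ≠ 0) k2
  exact ⟨hab.symm, by rw [hca, hab]⟩

lemma key_J2 {A : Type*} [Ring A] [Algebra ℂ A] (φ : A →ₗ[ℂ] A) (W : A)
    (hcan : ∀ a b : A, W * a = W * b → a = b)
    (hI : ∀ z : A, φ (W * z) = φ W * z + W * φ z)
    (x y : A)
    (Qx : φ (W * x * x) = φ (W*x) * x + W * x * φ x)
    (Qy : φ (W * y * y) = φ (W*y) * y + W * y * φ y)
    (Qxy : φ (W * (x+y) * (x+y)) = φ (W*(x+y)) * (x+y) + W * (x+y) * φ (x+y)) :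
    φ (x*y + y*x) = φ x * y + x * φ y + φ y * x + y * φ x := by
  apply hcan
  have mix : φ (W*x*y) + φ (W*y*x)
      = φ (W*x) * y + φ (W*y) * x + W * x * φ y + W * y * φ x := by
    have e := Qxy
    simp only [mul_add, add_mul, map_add] at e
    linear_combination (norm := module) e - Qx - Qy
  have h2 := hI x
  have h3 := hI y
  have h4 : W * (x*y) = W*x*y := by rw [mul_assoc]
  have h5 : W * (y*x) = W*y*x := by rw [mul_assoc]
  have e := mix
  rw [h2, h3] at e
  have h1' : φ (W*x*y) + φ (W*y*x) = φ W * (x*y+y*x) + W * φ (x*y+y*x) := by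
    rw [← h4, ← h5, ← map_add, ← mul_add, hI]
  rw [h1'] at e
  simp only [mul_add, add_mul, ← mul_assoc] at e ⊢
  linear_combination (norm := module) e

lemma mulSL (i j k l : Fin n) (M : Matrix (Fin n) (Fin n) ℂ) :
    (Matrix.single i j (1:ℂ) * M) k l = if k = i then M j l else 0 := by
  by_cases hk : k = i
  · subst hk; simp
  · simp [hk]

lemma mulSR (i j k l : Fin n) (M : Matrix (Fin n) (Fin n) ℂ) :
    (M * Matrix.single i j (1:ℂ)) k l = if l = j then M k i else 0 := by
  by_cases hl : l = j
  · subst hl; simp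
  · simp [hl]

lemma build_G [NeZero n] (D : Fin n → Fin n → Matrix (Fin n) (Fin n) ℂ)
    (Dtri : ∀ i j k l : Fin n, l < k → D i j k l = 0)
    (R1m : ∀ i : Fin n,
      D i i * Matrix.single i i 1 + Matrix.single i i 1 * D i i = D i i)
    (R2m : ∀ i j : Fin n, i ≠ j →
      0 = D i i * Matrix.single j j 1 + Matrix.single i i 1 * D j j
        + D j j * Matrix.single i i 1 + Matrix.single j j 1 * D i i)
    (R3m : ∀ i j : Fin n, i < j →
      D i j = D i i * Matrix.single i j 1 + Matrix.single i i 1 * D i j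
        + D i j * Matrix.single i i 1 + Matrix.single i j 1 * D i i)
    (R4m : ∀ i j : Fin n, i < j →
      D i j = D j j * Matrix.single i j 1 + Matrix.single j j 1 * D i j
        + D i j * Matrix.single j j 1 + Matrix.single i j 1 * D j j)
    (R5m : ∀ i j m : Fin n, i < j → j < m →
      D i m = D i j * Matrix.single j m 1 + Matrix.single i j 1 * D j m
        + D j m * Matrix.single i j 1 + Matrix.single j m 1 * D i j) :
    ∃ g : Matrix (Fin n) (Fin n) ℂ, g ∈ upperTriangularAlg n ∧
      ∀ i j : Fin n, i ≤ j → D i j = Matrix.single i j 1 * g - g * Matrix.single i j 1 := by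
  classical
  -- entrywise consequences
  have F1 : ∀ i : Fin n, D i i i i = 0 := by
    intro i
    have e := Matrix.ext_iff.mpr (R1m i) i i
    simp [mulSL, mulSR, Matrix.add_apply] at e
    linear_combination e
  have F2 : ∀ i k l : Fin n, k ≠ i → l ≠ i → D i i k l = 0 := by
    intro i k l hk hl
    by_cases hkl : k = l
    · subst hkl
      have e := Matrix.ext_iff.mpr (R2m i k (Ne.symm hk)) k k
      simp [mulSL, mulSR, Matrix.add_apply, hk] at e
      linear_combination (-1/2 : ℂ) * e
    · have e := Matrix.ext_iff.mpr (R2m i l (Ne.symm hl)) k l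
      simp [mulSL, mulSR, Matrix.add_apply, hk, hl, hkl] at e
      linear_combination -e
  have F3 : ∀ i k : Fin n, k ≠ i → D i i k i + D k k k i = 0 := by
    intro i k hk
    have e := Matrix.ext_iff.mpr (R2m i k (Ne.symm hk)) k i
    simp [mulSL, mulSR, Matrix.add_apply, hk, Ne.symm hk] at e
    linear_combination -e
  refine ⟨Matrix.of fun k l =>
    if k < l then D k k k l
    else if k = l then (if k = 0 then 0 else D 0 k 0 k)
    else 0, ?_, ?_⟩
  · intro k l hkl
    have hkl' : l < k := hkl
    show (if k < l then D k k k l else _) = 0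
    rw [if_neg (not_lt_of_gt hkl'), if_neg (LT.lt.ne' hkl')]
  · intro i j hij
    ext k l
    rw [Matrix.sub_apply, mulSL, mulSR]
    simp only [Matrix.of_apply]
    rcases eq_or_lt_of_le hij with rfl | hlt
    · -- diagonal case
      by_cases hk : k = i
      · subst hk
        rw [if_pos rfl]
        by_cases hl : l = k
        · subst hl
          simp [F1 l]
        · rw [if_neg hl, sub_zero]
          rcases lt_trichotomy k l with hkl | rfl | hlk
          · rw [if_pos hkl]
          · exact absurd rfl hl
          · rw [if_neg (not_lt_of_gt hlk), if_neg (LT.lt.ne' hlk)]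
            exact Dtri k k k l hlk
      · rw [if_neg hk]
        by_cases hl : l = i
        · subst hl
          rw [if_pos rfl, zero_sub]
          rcases lt_trichotomy k l with hkl | rfl | hlk
          · rw [if_pos hkl]
            have f3 := F3 l k hk
            linear_combination f3
          · exact absurd rfl hk
          · rw [if_neg (not_lt_of_gt hlk), if_neg (LT.lt.ne' hlk), Dtri l l k l hlk]
            ring
        · rw [if_neg hl, sub_zero]
          exact F2 i k l hk hl
    · -- off-diagonal case : i < j
      by_cases hk : k = i
      · subst hk  -- i is replaced by k
        rw [if_pos rfl]
        by_cases hl : l = j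
        · subst hl  -- j is replaced by l ; hlt : k < l
          rw [if_pos rfl]
          have hl0 : l ≠ 0 := (lt_of_le_of_lt (Fin.zero_le k) hlt).ne'
          rw [if_neg (lt_irrefl l), if_pos rfl, if_neg hl0]
          by_cases hk0 : k = 0
          · subst hk0
            rw [if_neg (lt_irrefl (0 : Fin n)), if_pos rfl, if_pos rfl, sub_zero]
          · rw [if_neg (lt_irrefl k), if_pos rfl, if_neg hk0]
            have h0k : (0 : Fin n) < k := (Fin.zero_le k).lt_of_ne (Ne.symm hk0)
            have e := Matrix.ext_iff.mpr (R5m 0 k l h0k hlt) 0 l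
            simp [mulSL, mulSR, Matrix.add_apply, hlt.ne', Ne.symm hk0] at e
            linear_combination -e
        · rw [if_neg hl, sub_zero]
          have e := Matrix.ext_iff.mpr (R4m k j hlt) k l
          simp [mulSL, mulSR, Matrix.add_apply, hl, hlt.ne] at e
          -- e : D k j k l = D j j j l
          rcases lt_trichotomy j l with hjl | rfl | hlj
          · rw [if_pos hjl]
            linear_combination e
          · exact absurd rfl hl
          · rw [if_neg (not_lt_of_gt hlj), if_neg (LT.lt.ne' hlj)]
            rw [Dtri j j j l hlj] at e
            linear_combination e
      · rw [if_neg hk]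
        by_cases hl : l = j
        · subst hl  -- j replaced by l ; hlt : i < l
          rw [if_pos rfl, zero_sub]
          have e := Matrix.ext_iff.mpr (R3m i l hlt) k l
          simp [mulSL, mulSR, Matrix.add_apply, hk, hlt.ne'] at e
          -- e : D i l k l = D i i k i
          rcases lt_trichotomy k i with hki | rfl | hik
          · rw [if_pos hki]
            have f3 := F3 i k hk
            linear_combination e + f3
          · exact absurd rfl hk
          · rw [if_neg (not_lt_of_gt hik), if_neg (LT.lt.ne' hik)]
            rw [Dtri i i k i hik] at e
            linear_combination e
        · rw [if_neg hl, sub_zero]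
          have e := Matrix.ext_iff.mpr (R3m i j hlt) k l
          simp [mulSL, mulSR, Matrix.add_apply, hk, hl, hlt.ne'] at e
          by_cases hli : l = i
          · subst hli  -- i replaced by l ; hlt : l < j
            have e4 := Matrix.ext_iff.mpr (R4m l j hlt) k l
            simp [mulSL, mulSR, Matrix.add_apply, hk, hlt.ne, hlt.ne'] at e4
            by_cases hkj : k = j
            · subst hkj
              exact Dtri l k k l hlt
            · simp [hkj] at e4
              linear_combination e4
          · simp [hli] at e
            linear_combination e


end Stmt15Aux

/-- Let `n ≥ 2`, `A = T(n, ℂ)`, and `Ω = W` an invertible element of `A`.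
Every linear `φ : A → A` with `φ(S) T + S φ(T) = φ(Ω)` whenever `S T = Ω` is an inner
derivation: `φ(X) = X G − G X` for some `G`, which can be chosen in `A`. -/
theorem stmt15 (n : ℕ) (hn : 2 ≤ n) (W : upperTriangularAlg n) (hW : IsUnit W)
    (φ : upperTriangularAlg n →ₗ[ℂ] upperTriangularAlg n)
    (h : ∀ S T : upperTriangularAlg n, S * T = W → φ S * T + S * φ T = φ W) :
    ∃ G : upperTriangularAlg n, ∀ X : upperTriangularAlg n, φ X = X * G - G * X := by
  classical
  haveI : NeZero n := ⟨by omega⟩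
  open Stmt15Aux Matrix in
  -- cancellation by W
  have hinv : ((hW.unit⁻¹ : (upperTriangularAlg n)ˣ) : upperTriangularAlg n) * W = 1 :=
    hW.val_inv_mul
  have hcan : ∀ a b : upperTriangularAlg n, W * a = W * b → a = b := by
    intro a b hab
    calc a = (((hW.unit⁻¹ : (upperTriangularAlg n)ˣ) : upperTriangularAlg n) * W) * a := by
            rw [hinv, one_mul]
    _ = (((hW.unit⁻¹ : (upperTriangularAlg n)ˣ) : upperTriangularAlg n)) * (W * b) := by
            rw [mul_assoc, hab]
    _ = b := by rw [← mul_assoc, hinv, one_mul]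
  have hφ1 : φ 1 = 0 := by
    have e := h W 1 (mul_one W)
    rw [mul_one] at e
    refine hcan _ _ ?_
    rw [mul_zero]
    exact add_eq_left.mp e
  -- the linear map measuring the defect of the W-Leibniz rule
  set L : upperTriangularAlg n →ₗ[ℂ] upperTriangularAlg n :=
    (φ ∘ₗ LinearMap.mulLeft ℂ W) - LinearMap.mulLeft ℂ (φ W) - LinearMap.mulLeft ℂ W ∘ₗ φ
    with hL
  have hLapp : ∀ X, L X = φ (W * X) - φ W * X - W * φ X := by
    intro X
    simp [hL, LinearMap.mulLeft_apply]
  have hIbasis : ∀ i j : Fin n, L (Ee i j) = 0 := by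
    intro i j
    by_cases hij : i ≤ j
    · rcases eq_or_lt_of_le hij with rfl | hlt
      · have := (key_idem φ W h hφ1 (Ee i i) (Ee_mul_same le_rfl le_rfl)).1
        rw [hLapp, this]
        abel
      · have hsq : (Ee i j : upperTriangularAlg n) * Ee i j = 0 :=
          Ee_mul_of_ne hij hij hlt.ne'
        have := (key_nil φ W h hφ1 (Ee i j) (by rw [hsq, zero_mul])).1
        rw [hLapp, this]
        abel
    · rw [hLapp]
      simp [Ee, hij]
  have hI : ∀ X : upperTriangularAlg n, φ (W * X) = φ W * X + W * φ X := by
    intro X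
    have h0 := span_units L hIbasis X
    rw [hLapp] at h0
    have : φ (W * X) - (φ W * X + W * φ X) = 0 := by
      rw [← h0]; abel
    linear_combination (norm := module) this
  -- Jordan-square property
  have Qnil : ∀ z : upperTriangularAlg n, z*z*z = 0 →
      φ (W * z * z) = φ (W*z) * z + W * z * φ z := fun z hz => (key_nil φ W h hφ1 z hz).2
  have Qidem : ∀ z : upperTriangularAlg n, z*z = z →
      φ (W * z * z) = φ (W*z) * z + W * z * φ z := by
    intro z hz
    have h2 := (key_idem φ W h hφ1 z hz).2
    conv_lhs => rw [mul_assoc, hz]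
    exact h2.symm
    -- matrix-unit relations coming from the Jordan structure
  have R1 : ∀ i : Fin n, φ (Ee i i) * Ee i i + Ee i i * φ (Ee i i) = φ (Ee i i) := by
    intro i
    have hf : (Ee i i : upperTriangularAlg n) * Ee i i = Ee i i := Ee_mul_same le_rfl le_rfl
    have t1 := (key_idem φ W h hφ1 (Ee i i) hf).2
    rw [hI (Ee i i)] at t1
    simp only [add_mul, mul_assoc] at t1
    rw [hf] at t1
    apply hcan
    simp only [mul_add]
    linear_combination (norm := module) t1
  have R2 : ∀ i j : Fin n, i ≠ j →
      (0:upperTriangularAlg n) = φ (Ee i i) * Ee j j + Ee i i * φ (Ee j j)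
        + φ (Ee j j) * Ee i i + Ee j j * φ (Ee i i) := by
    intro i j hij
    have hfi : (Ee i i : upperTriangularAlg n) * Ee i i = Ee i i := Ee_mul_same le_rfl le_rfl
    have hfj : (Ee j j : upperTriangularAlg n) * Ee j j = Ee j j := Ee_mul_same le_rfl le_rfl
    have hij1 : (Ee i i : upperTriangularAlg n) * Ee j j = 0 := Ee_mul_of_ne le_rfl le_rfl hij
    have hij2 : (Ee j j : upperTriangularAlg n) * Ee i i = 0 :=
      Ee_mul_of_ne le_rfl le_rfl hij.symm
    have hsum : ((Ee i i : upperTriangularAlg n) + Ee j j) * ((Ee i i : upperTriangularAlg n) + Ee j j)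
        = Ee i i + Ee j j := by
      simp only [add_mul, mul_add, hfi, hfj, hij1, hij2]
      abel
    have j2 := key_J2 φ W hcan hI (Ee i i) (Ee j j) (Qidem _ hfi) (Qidem _ hfj) (Qidem _ hsum)
    rw [hij1, hij2, add_zero, map_zero] at j2
    exact j2
  have R3 : ∀ i j : Fin n, i < j →
      φ (Ee i j) = φ (Ee i i) * Ee i j + Ee i i * φ (Ee i j)
        + φ (Ee i j) * Ee i i + Ee i j * φ (Ee i i) := by
    intro i j hlt
    have hfi : (Ee i i : upperTriangularAlg n) * Ee i i = Ee i i := Ee_mul_same le_rfl le_rfl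
    have he2 : (Ee i j : upperTriangularAlg n) * Ee i j = 0 :=
      Ee_mul_of_ne hlt.le hlt.le hlt.ne'
    have hxy : (Ee i i : upperTriangularAlg n) * Ee i j = Ee i j := Ee_mul_same le_rfl hlt.le
    have hyx : (Ee i j : upperTriangularAlg n) * Ee i i = 0 :=
      Ee_mul_of_ne hlt.le le_rfl hlt.ne'
    have hsum : ((Ee i i : upperTriangularAlg n) + Ee i j) * ((Ee i i : upperTriangularAlg n) + Ee i j)
        = Ee i i + Ee i j := by
      simp only [add_mul, mul_add, hfi, he2, hxy, hyx]
      abel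
    have j2 := key_J2 φ W hcan hI (Ee i i) (Ee i j) (Qidem _ hfi)
      (Qnil _ (by rw [he2, zero_mul])) (Qidem _ hsum)
    rw [hxy, hyx, add_zero] at j2
    exact j2
  have R4 : ∀ i j : Fin n, i < j →
      φ (Ee i j) = φ (Ee j j) * Ee i j + Ee j j * φ (Ee i j)
        + φ (Ee i j) * Ee j j + Ee i j * φ (Ee j j) := by
    intro i j hlt
    have hfj : (Ee j j : upperTriangularAlg n) * Ee j j = Ee j j := Ee_mul_same le_rfl le_rfl
    have he2 : (Ee i j : upperTriangularAlg n) * Ee i j = 0 :=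
      Ee_mul_of_ne hlt.le hlt.le hlt.ne'
    have hxy : (Ee j j : upperTriangularAlg n) * Ee i j = 0 :=
      Ee_mul_of_ne le_rfl hlt.le hlt.ne'
    have hyx : (Ee i j : upperTriangularAlg n) * Ee j j = Ee i j := Ee_mul_same hlt.le le_rfl
    have hsum : ((Ee j j : upperTriangularAlg n) + Ee i j) * ((Ee j j : upperTriangularAlg n) + Ee i j)
        = Ee j j + Ee i j := by
      simp only [add_mul, mul_add, hfj, he2, hxy, hyx]
      abel
    have j2 := key_J2 φ W hcan hI (Ee j j) (Ee i j) (Qidem _ hfj)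
      (Qnil _ (by rw [he2, zero_mul])) (Qidem _ hsum)
    rw [hxy, hyx, zero_add] at j2
    exact j2
  have R5 : ∀ i j m : Fin n, i < j → j < m →
      φ (Ee i m) = φ (Ee i j) * Ee j m + Ee i j * φ (Ee j m)
        + φ (Ee j m) * Ee i j + Ee j m * φ (Ee i j) := by
    intro i j m hij hjm
    have hx2 : (Ee i j : upperTriangularAlg n) * Ee i j = 0 :=
      Ee_mul_of_ne hij.le hij.le hij.ne'
    have hy2 : (Ee j m : upperTriangularAlg n) * Ee j m = 0 :=
      Ee_mul_of_ne hjm.le hjm.le hjm.ne'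
    have hxy : (Ee i j : upperTriangularAlg n) * Ee j m = Ee i m := Ee_mul_same hij.le hjm.le
    have hyx : (Ee j m : upperTriangularAlg n) * Ee i j = 0 :=
      Ee_mul_of_ne hjm.le hij.le (hij.trans hjm).ne'
    have hz2 : ((Ee i j : upperTriangularAlg n) + Ee j m) * ((Ee i j : upperTriangularAlg n) + Ee j m)
        = Ee i m := by
      simp only [add_mul, mul_add, hx2, hy2, hxy, hyx]
      abel
    have hz3 : ((Ee i j : upperTriangularAlg n) + Ee j m) * ((Ee i j : upperTriangularAlg n) + Ee j m)
        * ((Ee i j : upperTriangularAlg n) + Ee j m) = 0 := by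
      rw [hz2, mul_add, Ee_mul_of_ne (hij.trans hjm).le hij.le (hij.trans hjm).ne',
        Ee_mul_of_ne (hij.trans hjm).le hjm.le hjm.ne', add_zero]
    have j2 := key_J2 φ W hcan hI (Ee i j) (Ee j m)
      (Qnil _ (by rw [hx2, zero_mul])) (Qnil _ (by rw [hy2, zero_mul])) (Qnil _ hz3)
    rw [hxy, hyx, add_zero] at j2
    exact j2
    -- matrix-level versions
  have Dtri : ∀ (i j k l : Fin n), l < k →
      (φ (Ee i j) : Matrix (Fin n) (Fin n) ℂ) k l = 0 :=
    fun i j k l hlk => (φ (Ee i j)).2 hlk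
  have R1m : ∀ i : Fin n,
      (φ (Ee i i) : Matrix (Fin n) (Fin n) ℂ) * Matrix.single i i 1
        + Matrix.single i i 1 * (φ (Ee i i) : Matrix (Fin n) (Fin n) ℂ)
        = (φ (Ee i i) : Matrix (Fin n) (Fin n) ℂ) := by
    intro i
    have e := congrArg (Subtype.val) (R1 i)
    push_cast at e
    rw [Ee_val le_rfl] at e
    exact e
  have R2m : ∀ i j : Fin n, i ≠ j →
      (0 : Matrix (Fin n) (Fin n) ℂ)
        = (φ (Ee i i) : Matrix (Fin n) (Fin n) ℂ) * Matrix.single j j 1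
          + Matrix.single i i 1 * (φ (Ee j j) : Matrix (Fin n) (Fin n) ℂ)
          + (φ (Ee j j) : Matrix (Fin n) (Fin n) ℂ) * Matrix.single i i 1
          + Matrix.single j j 1 * (φ (Ee i i) : Matrix (Fin n) (Fin n) ℂ) := by
    intro i j hij
    have e := congrArg (Subtype.val) (R2 i j hij)
    push_cast at e
    rw [Ee_val (le_refl i), Ee_val (le_refl j)] at e
    exact e
  have R3m : ∀ i j : Fin n, i < j →
      (φ (Ee i j) : Matrix (Fin n) (Fin n) ℂ)
        = (φ (Ee i i) : Matrix (Fin n) (Fin n) ℂ) * Matrix.single i j 1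
          + Matrix.single i i 1 * (φ (Ee i j) : Matrix (Fin n) (Fin n) ℂ)
          + (φ (Ee i j) : Matrix (Fin n) (Fin n) ℂ) * Matrix.single i i 1
          + Matrix.single i j 1 * (φ (Ee i i) : Matrix (Fin n) (Fin n) ℂ) := by
    intro i j hlt
    have e := congrArg (Subtype.val) (R3 i j hlt)
    push_cast at e
    rw [Ee_val (le_refl i), Ee_val hlt.le] at e
    exact e
  have R4m : ∀ i j : Fin n, i < j →
      (φ (Ee i j) : Matrix (Fin n) (Fin n) ℂ)
        = (φ (Ee j j) : Matrix (Fin n) (Fin n) ℂ) * Matrix.single i j 1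
          + Matrix.single j j 1 * (φ (Ee i j) : Matrix (Fin n) (Fin n) ℂ)
          + (φ (Ee i j) : Matrix (Fin n) (Fin n) ℂ) * Matrix.single j j 1
          + Matrix.single i j 1 * (φ (Ee j j) : Matrix (Fin n) (Fin n) ℂ) := by
    intro i j hlt
    have e := congrArg (Subtype.val) (R4 i j hlt)
    push_cast at e
    rw [Ee_val (le_refl j), Ee_val hlt.le] at e
    exact e
  have R5m : ∀ i j m : Fin n, i < j → j < m →
      (φ (Ee i m) : Matrix (Fin n) (Fin n) ℂ)
        = (φ (Ee i j) : Matrix (Fin n) (Fin n) ℂ) * Matrix.single j m 1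
          + Matrix.single i j 1 * (φ (Ee j m) : Matrix (Fin n) (Fin n) ℂ)
          + (φ (Ee j m) : Matrix (Fin n) (Fin n) ℂ) * Matrix.single i j 1
          + Matrix.single j m 1 * (φ (Ee i j) : Matrix (Fin n) (Fin n) ℂ) := by
    intro i j m hij hjm
    have e := congrArg (Subtype.val) (R5 i j m hij hjm)
    push_cast at e
    rw [Ee_val hij.le, Ee_val hjm.le] at e
    exact e
  obtain ⟨g, hgmem, hgspec⟩ :=
    build_G (fun i j => (φ (Ee i j) : Matrix (Fin n) (Fin n) ℂ)) Dtri R1m R2m R3m R4m R5m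
  refine ⟨⟨g, hgmem⟩, ?_⟩
  intro X
  set G : upperTriangularAlg n := ⟨g, hgmem⟩ with hG
  set Ψ : upperTriangularAlg n →ₗ[ℂ] upperTriangularAlg n :=
    φ - (LinearMap.mulRight ℂ G - LinearMap.mulLeft ℂ G) with hΨ
  have hΨapp : ∀ Y, Ψ Y = φ Y - (Y * G - G * Y) := by
    intro Y
    simp [hΨ, LinearMap.mulRight_apply, LinearMap.mulLeft_apply]
  have hbasis : ∀ i j : Fin n, Ψ (Ee i j) = 0 := by
    intro i j
    rw [hΨapp, sub_eq_zero]
    by_cases hij : i ≤ j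
    · apply Subtype.ext
      push_cast
      rw [Ee_val hij]
      exact hgspec i j hij
    · have hEz : (Ee i j : upperTriangularAlg n) = 0 := by simp [Ee, hij]
      rw [hEz, map_zero, zero_mul, mul_zero, sub_zero]
  have hfin := span_units Ψ hbasis X
  rw [hΨapp] at hfin
  exact sub_eq_zero.mp hfin
end
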